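/- Let R, S, H be complex matrices of compatible sizes with H Hermitian. There exists a matrix J such that H + [R* S*] [[0, J*],[J, 0]] [R; S] is negative definite if and only if R_⊥* H R_⊥ < 0 and S_⊥* H S_⊥ < 0, where R_⊥ and S_⊥ are injective matrices with ranges equal to ker R and ker S respectively. -/

import Mathlib

set_option linter.unusedSectionVars false
set_option maxHeartbeats 2000000
set_option synthInstance.maxHeartbeats 400000

open Matrix
open scoped ComplexOrder

namespace FinslerII

variable {l m n k : Type*} [Fintype l] [Fintype m] [Fintype n] [Fintype k]

theorem adj1 (A : Matrix m n ℂ) (x : n → ℂ) (y : m → ℂ) :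
    star (A *ᵥ x) ⬝ᵥ y = star x ⬝ᵥ (Aᴴ *ᵥ y) := by
  rw [star_mulVec, Matrix.dotProduct_mulVec]

theorem quad' (G : Matrix m m ℂ) (A : Matrix m n ℂ) (B : Matrix m k ℂ)
    (x : n → ℂ) (y : k → ℂ) :
    star x ⬝ᵥ ((Aᴴ * (G * B)) *ᵥ y) = star (A *ᵥ x) ⬝ᵥ (G *ᵥ (B *ᵥ y)) := by
  rw [← Matrix.mulVec_mulVec, ← Matrix.mulVec_mulVec, adj1]

theorem herm_symm {H : Matrix n n ℂ} (hH : H.IsHermitian) (x y : n → ℂ) :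
    star x ⬝ᵥ (H *ᵥ y) = star (star y ⬝ᵥ (H *ᵥ x)) := by
  rw [Matrix.star_dotProduct]
  exact congrArg star (by rw [adj1, hH.eq])

theorem mat_ext {A B : Matrix m n ℂ} (h : ∀ v, A *ᵥ v = B *ᵥ v) : A = B := by
  classical
  ext i j
  have := congrFun (h (Pi.single j 1)) i
  rwa [Matrix.mulVec_single_one, Matrix.mulVec_single_one] at this

theorem eq_zero_of_form (M : Matrix n n ℂ) (h : ∀ x y, star x ⬝ᵥ (M *ᵥ y) = 0) : M = 0 := by
  apply mat_ext
  intro v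
  have h2 := h (M *ᵥ v) v
  rw [dotProduct_star_self_eq_zero] at h2
  simp [h2]

theorem mulVec_toMatrix' [DecidableEq n] (f : (n → ℂ) →ₗ[ℂ] (m → ℂ)) (y : n → ℂ) :
    (LinearMap.toMatrix' f) *ᵥ y = f y := by
  rw [← Matrix.toLin'_apply, Matrix.toLin'_toMatrix']

theorem posDef_neg_conj_iff (H : Matrix n n ℂ) (hH : H.IsHermitian)
    (B : Matrix n k ℂ) (hB : Function.Injective B.mulVecLin) :
    (-(Bᴴ * H * B)).PosDef ↔
      ∀ x ∈ LinearMap.range B.mulVecLin, x ≠ 0 → star x ⬝ᵥ (H *ᵥ x) < 0 := by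
  have hq : ∀ v, star v ⬝ᵥ ((-(Bᴴ * H * B)) *ᵥ v) = -(star (B *ᵥ v) ⬝ᵥ (H *ᵥ (B *ᵥ v))) := by
    intro v
    rw [Matrix.neg_mulVec, dotProduct_neg, Matrix.mul_assoc, quad']
  constructor
  · rintro ⟨hherm, hpos⟩ x ⟨v, rfl⟩ hx
    rw [Matrix.mulVecLin_apply] at hx ⊢
    have hv : v ≠ 0 := by rintro rfl; simp at hx
    have := (posDef_iff_dotProduct_mulVec.mp ⟨hherm, hpos⟩).2 hv
    rw [hq] at this
    exact neg_pos.mp this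
  · intro hneg
    refine Matrix.PosDef.of_dotProduct_mulVec_pos ?_ ?_
    · have : (Bᴴ * H * B)ᴴ = Bᴴ * H * B := by
        rw [Matrix.conjTranspose_mul, Matrix.conjTranspose_mul, Matrix.conjTranspose_conjTranspose,
          hH.eq, Matrix.mul_assoc]
      exact (Matrix.IsHermitian.neg this)
    · intro v hv
      rw [hq]
      have hBv : B *ᵥ v ≠ 0 := by
        intro h0
        exact hv (hB (by simpa [Matrix.mulVecLin_apply] using h0))
      have := hneg (B *ᵥ v) ⟨v, by simp [Matrix.mulVecLin_apply]⟩ hBv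
      exact neg_pos.mpr this

theorem exists_factor_left {E F G : Type*} [AddCommGroup E] [AddCommGroup F] [AddCommGroup G]
    [Module ℂ E] [Module ℂ F] [Module ℂ G]
    (g : E →ₗ[ℂ] F) (f : E →ₗ[ℂ] G) (h : LinearMap.ker g ≤ LinearMap.ker f) :
    ∃ h' : F →ₗ[ℂ] G, ∀ x, h' (g x) = f x := by
  obtain ⟨C, hC⟩ := Submodule.exists_isCompl (LinearMap.ker g)
  let f' : C →ₗ[ℂ] LinearMap.range g :=
    (g ∘ₗ C.subtype).codRestrict (LinearMap.range g) (fun c => ⟨c, rfl⟩)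
  have hf'inj : Function.Injective f' := by
    intro a b hab
    have h1 : g a = g b := congrArg Subtype.val hab
    have hmem : (a : E) - b ∈ LinearMap.ker g := by
      simp [LinearMap.mem_ker, map_sub, h1]
    have hmemC : (a : E) - b ∈ C := sub_mem a.2 b.2
    have h2 : (a : E) - b = 0 := by
      simpa using hC.symm.disjoint.le_bot ⟨hmemC, hmem⟩
    exact Subtype.ext (sub_eq_zero.mp h2)
  have hf'surj : Function.Surjective f' := by
    rintro ⟨y, x, rfl⟩
    obtain ⟨u, hu, c, hc, rfl⟩ := Submodule.mem_sup.mp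
      (show x ∈ LinearMap.ker g ⊔ C by rw [hC.sup_eq_top]; trivial)
    refine ⟨⟨c, hc⟩, ?_⟩
    apply Subtype.ext
    simp only [f', LinearMap.codRestrict_apply, LinearMap.comp_apply, Submodule.coe_subtype]
    rw [map_add, LinearMap.mem_ker.mp hu, zero_add]
    rfl
  let e := LinearEquiv.ofBijective f' ⟨hf'inj, hf'surj⟩
  obtain ⟨D, hD⟩ := Submodule.exists_isCompl (LinearMap.range g)
  let h' : F →ₗ[ℂ] G :=
    f ∘ₗ C.subtype ∘ₗ (e.symm : LinearMap.range g →ₗ[ℂ] C) ∘ₗ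
      Submodule.linearProjOfIsCompl (LinearMap.range g) D hD
  refine ⟨h', fun x => ?_⟩
  obtain ⟨u, hu, c, hc, hx⟩ := Submodule.mem_sup.mp
    (show x ∈ LinearMap.ker g ⊔ C by rw [hC.sup_eq_top]; trivial)
  have hgx : g x = g c := by rw [← hx, map_add, LinearMap.mem_ker.mp hu, zero_add]
  have hproj : Submodule.linearProjOfIsCompl (LinearMap.range g) D hD (g x)
      = ⟨g x, ⟨x, rfl⟩⟩ :=
    Submodule.linearProjOfIsCompl_apply_left hD ⟨g x, ⟨x, rfl⟩⟩
  have hesymm : (e.symm ⟨g x, ⟨x, rfl⟩⟩ : C) = ⟨c, hc⟩ := by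
    apply e.injective
    rw [LinearEquiv.apply_symm_apply]
    apply Subtype.ext
    simp only [e, LinearEquiv.ofBijective_apply, f', LinearMap.codRestrict_apply,
      LinearMap.comp_apply, Submodule.coe_subtype]
    exact hgx
  have hfc : f c = f x := by
    rw [← hx, map_add, LinearMap.mem_ker.mp (h hu), zero_add]
  simp only [h', LinearMap.comp_apply, hproj, LinearEquiv.coe_coe, Submodule.coe_subtype]
  rw [hesymm]
  exact hfc

theorem exists_section {E F : Type*} [AddCommGroup E] [AddCommGroup F]
    [Module ℂ E] [Module ℂ F] (g : E →ₗ[ℂ] F) :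
    ∃ s : F →ₗ[ℂ] E, ∀ y ∈ LinearMap.range g, g (s y) = y := by
  obtain ⟨C, hC⟩ := Submodule.exists_isCompl (LinearMap.ker g)
  let f' : C →ₗ[ℂ] LinearMap.range g :=
    (g ∘ₗ C.subtype).codRestrict (LinearMap.range g) (fun c => ⟨c, rfl⟩)
  have hf'inj : Function.Injective f' := by
    intro a b hab
    have h1 : g a = g b := congrArg Subtype.val hab
    have hmem : (a : E) - b ∈ LinearMap.ker g := by
      simp [LinearMap.mem_ker, map_sub, h1]
    have hmemC : (a : E) - b ∈ C := sub_mem a.2 b.2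
    have h2 : (a : E) - b = 0 := by
      simpa using hC.symm.disjoint.le_bot ⟨hmemC, hmem⟩
    exact Subtype.ext (sub_eq_zero.mp h2)
  have hf'surj : Function.Surjective f' := by
    rintro ⟨y, x, rfl⟩
    obtain ⟨u, hu, c, hc, rfl⟩ := Submodule.mem_sup.mp
      (show x ∈ LinearMap.ker g ⊔ C by rw [hC.sup_eq_top]; trivial)
    refine ⟨⟨c, hc⟩, ?_⟩
    apply Subtype.ext
    simp only [f', LinearMap.codRestrict_apply, LinearMap.comp_apply, Submodule.coe_subtype]
    rw [map_add, LinearMap.mem_ker.mp hu, zero_add]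
    rfl
  let e := LinearEquiv.ofBijective f' ⟨hf'inj, hf'surj⟩
  obtain ⟨D, hD⟩ := Submodule.exists_isCompl (LinearMap.range g)
  refine ⟨C.subtype ∘ₗ (e.symm : LinearMap.range g →ₗ[ℂ] C) ∘ₗ
      Submodule.linearProjOfIsCompl (LinearMap.range g) D hD, ?_⟩
  rintro y hy
  have hproj : Submodule.linearProjOfIsCompl (LinearMap.range g) D hD y = ⟨y, hy⟩ :=
    Submodule.linearProjOfIsCompl_apply_left hD ⟨y, hy⟩
  simp only [LinearMap.comp_apply, hproj, Submodule.coe_subtype]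
  have := congrArg Subtype.val (e.apply_symm_apply ⟨y, hy⟩)
  exact this

theorem exists_J {nn p q kS : Type*} [Fintype nn] [Fintype p] [Fintype q] [Fintype kS]
    (R : Matrix p nn ℂ) (S : Matrix q nn ℂ) (Sp : Matrix nn kS ℂ)
    (hSinj : Function.Injective Sp.mulVecLin)
    (hSrange : LinearMap.range Sp.mulVecLin = LinearMap.ker S.mulVecLin)
    (K : Matrix nn nn ℂ)
    (hK1 : ∀ u, R *ᵥ u = 0 → K *ᵥ u = 0)
    (hK2 : ∀ w, S *ᵥ w = 0 → Kᴴ *ᵥ w = 0) :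
    ∃ J : Matrix q p ℂ, Sᴴ * J * R = K := by
  classical
  have hSSp : ∀ v, S *ᵥ (Sp *ᵥ v) = 0 := by
    intro v
    have : Sp *ᵥ v ∈ LinearMap.ker S.mulVecLin := by
      rw [← hSrange]; exact ⟨v, rfl⟩
    simpa [Matrix.mulVecLin_apply] using this
  have hSpHK : Spᴴ * K = 0 := by
    have h1 : Kᴴ * Sp = 0 := mat_ext fun v => by
      rw [← Matrix.mulVec_mulVec, hK2 _ (hSSp v), Matrix.zero_mulVec]
    calc Spᴴ * K = (Kᴴ * Sp)ᴴ := by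
          rw [Matrix.conjTranspose_mul, Matrix.conjTranspose_conjTranspose]
      _ = 0 := by rw [h1, Matrix.conjTranspose_zero]
  have hrangeSH : LinearMap.range (Sᴴ.mulVecLin) = LinearMap.ker (Spᴴ.mulVecLin) := by
    apply Submodule.eq_of_le_of_finrank_le
    · rintro x ⟨u, rfl⟩
      have h2 : Spᴴ * Sᴴ = 0 := by
        have h0 : S * Sp = 0 := mat_ext fun v => by
          rw [← Matrix.mulVec_mulVec, hSSp v, Matrix.zero_mulVec]
        calc Spᴴ * Sᴴ = (S * Sp)ᴴ := by rw [Matrix.conjTranspose_mul]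
          _ = 0 := by rw [h0, Matrix.conjTranspose_zero]
      simp only [LinearMap.mem_ker, Matrix.mulVecLin_apply, Matrix.mulVec_mulVec, h2,
        Matrix.zero_mulVec]
    · have r1 := LinearMap.finrank_range_add_finrank_ker (S.mulVecLin)
      have r2 := LinearMap.finrank_range_add_finrank_ker (Spᴴ.mulVecLin)
      have r3 := LinearMap.finrank_range_add_finrank_ker (Sp.mulVecLin)
      rw [Module.finrank_fintype_fun_eq_card] at r1 r2 r3
      have hkerSp : LinearMap.ker Sp.mulVecLin = ⊥ := LinearMap.ker_eq_bot.mpr hSinj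
      rw [hkerSp, finrank_bot, add_zero] at r3
      have r4 : Module.finrank ℂ (LinearMap.range (Spᴴ.mulVecLin))
          = Module.finrank ℂ (LinearMap.range (Sp.mulVecLin)) :=
        Matrix.rank_conjTranspose Sp
      have r5 : Module.finrank ℂ (LinearMap.range (Sᴴ.mulVecLin))
          = Module.finrank ℂ (LinearMap.range (S.mulVecLin)) :=
        Matrix.rank_conjTranspose S
      have r6 : Module.finrank ℂ (LinearMap.ker S.mulVecLin)
          = Module.finrank ℂ (LinearMap.range (Sp.mulVecLin)) := by rw [hSrange]
      omega
  have hrangeK : ∀ x, K *ᵥ x ∈ LinearMap.range (Sᴴ.mulVecLin) := by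
    intro x
    rw [hrangeSH]
    simp only [LinearMap.mem_ker, Matrix.mulVecLin_apply, Matrix.mulVec_mulVec, hSpHK,
      Matrix.zero_mulVec]
  obtain ⟨A, hA⟩ := exists_factor_left R.mulVecLin K.mulVecLin
    (fun x hx => by
      simp only [LinearMap.mem_ker, Matrix.mulVecLin_apply] at hx ⊢
      exact hK1 x hx)
  obtain ⟨s, hs⟩ := exists_section (Sᴴ.mulVecLin)
  refine ⟨LinearMap.toMatrix' (s ∘ₗ A), mat_ext fun x => ?_⟩
  rw [← Matrix.mulVec_mulVec, ← Matrix.mulVec_mulVec, mulVec_toMatrix']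
  have h1 : (s ∘ₗ A) (R *ᵥ x) = s (K *ᵥ x) := by
    simp only [LinearMap.comp_apply]
    congr 1
    have := hA x
    simpa only [Matrix.mulVecLin_apply] using this
  rw [h1]
  have := hs (K *ᵥ x) (hrangeK x)
  simpa only [Matrix.mulVecLin_apply] using this

theorem lemA {n : Type*} [Fintype n] (H : Matrix n n ℂ) (hH : H.IsHermitian)
    (U W : Submodule ℂ (n → ℂ))
    (hU : ∀ x ∈ U, x ≠ 0 → star x ⬝ᵥ (H *ᵥ x) < 0)
    (hW : ∀ x ∈ W, x ≠ 0 → star x ⬝ᵥ (H *ᵥ x) < 0) :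
    ∃ K : Matrix n n ℂ, (∀ u ∈ U, K *ᵥ u = 0) ∧ (∀ w ∈ W, Kᴴ *ᵥ w = 0) ∧
      (-(H + K + Kᴴ)).PosDef := by
  classical
  set V1 : Submodule ℂ (n → ℂ) := U ⊓ W with hV1def
  have hV1U : V1 ≤ U := inf_le_left
  have hV1W : V1 ≤ W := inf_le_right
  have hV1neg : ∀ v ∈ V1, v ≠ 0 → star v ⬝ᵥ (H *ᵥ v) < 0 := fun v hv => hU v (hV1U hv)
  -- basis matrix of V1
  set d := Module.finrank ℂ V1 with hd
  set b : Module.Basis (Fin d) ℂ V1 := Module.finBasis ℂ V1 with hb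
  set M : Matrix n (Fin d) ℂ := Matrix.of (fun i j => (b j : n → ℂ) i) with hM
  have hMmulVec : ∀ c : Fin d → ℂ, M *ᵥ c = ∑ j, c j • ((b j : n → ℂ)) := by
    intro c; funext i
    simp only [Matrix.mulVec, dotProduct, hM, Matrix.of_apply, Finset.sum_apply,
      Pi.smul_apply, smul_eq_mul]
    exact Finset.sum_congr rfl fun j _ => mul_comm _ _
  have hcoe_sum : ∀ c : Fin d → ℂ, ((∑ j, c j • b j : V1) : n → ℂ) = ∑ j, c j • ((b j : n → ℂ)) := by
    intro c
    simp
  have hMmem : ∀ c, M *ᵥ c ∈ V1 := fun c => by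
    rw [hMmulVec]
    exact Submodule.sum_mem _ (fun j _ => Submodule.smul_mem _ _ (b j).2)
  have hMrepr : ∀ v ∈ V1, ∃ c, M *ᵥ c = v := by
    intro v hv
    refine ⟨b.equivFun ⟨v, hv⟩, ?_⟩
    rw [hMmulVec, ← hcoe_sum]
    have h2 : (∑ j, (b.equivFun ⟨v, hv⟩) j • b j : V1) = ⟨v, hv⟩ := b.sum_equivFun ⟨v, hv⟩
    rw [h2]
  have hMinj : ∀ c, M *ᵥ c = 0 → c = 0 := by
    intro c hc
    have h1 : ((b.equivFun.symm c : V1) : n → ℂ) = M *ᵥ c := by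
      rw [b.equivFun_symm_apply, hMmulVec, hcoe_sum]
    have h2 : (b.equivFun.symm c : V1) = 0 := by
      apply Subtype.ext
      rw [h1, hc]; rfl
    have := b.equivFun.symm.injective (by rw [h2, map_zero] : b.equivFun.symm c = b.equivFun.symm 0)
    exact this
  -- the compressed matrix B0
  have hB0inj : Function.Injective (Mᴴ * (H * M)).mulVecLin := by
    have hker : ∀ c, (Mᴴ * (H * M)) *ᵥ c = 0 → c = 0 := by
      intro c h0
      have hq : star (M *ᵥ c) ⬝ᵥ (H *ᵥ (M *ᵥ c)) = 0 := by
        rw [← quad' H M M, h0, dotProduct_zero]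
      have hMc : M *ᵥ c = 0 := by
        by_contra hne
        exact (ne_of_lt (hV1neg _ (hMmem c) hne)) hq
      exact hMinj c hMc
    intro c1 c2 h12
    have : (Mᴴ * (H * M)) *ᵥ (c1 - c2) = 0 := by
      rw [Matrix.mulVec_sub]
      have : (Mᴴ * (H * M)) *ᵥ c1 = (Mᴴ * (H * M)) *ᵥ c2 := h12
      rw [this, sub_self]
    exact sub_eq_zero.mp (hker _ this)
  have hB0surj := LinearMap.injective_iff_surjective.mp hB0inj
  set B0e : (Fin d → ℂ) ≃ₗ[ℂ] (Fin d → ℂ) :=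
    LinearEquiv.ofBijective (Mᴴ * (H * M)).mulVecLin ⟨hB0inj, hB0surj⟩ with hB0e
  have hB0eapp : ∀ c, B0e c = (Mᴴ * (H * M)) *ᵥ c := fun c => rfl
  set π : (n → ℂ) →ₗ[ℂ] (n → ℂ) :=
    M.mulVecLin ∘ₗ (B0e.symm : (Fin d → ℂ) →ₗ[ℂ] (Fin d → ℂ)) ∘ₗ (Mᴴ * H).mulVecLin with hπ
  have hπapply : ∀ y, π y = M *ᵥ (B0e.symm ((Mᴴ * H) *ᵥ y)) := fun y => rfl
  have hπmem : ∀ y, π y ∈ V1 := fun y => by rw [hπapply]; exact hMmem _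
  have hMHM : ∀ c, (Mᴴ * H) *ᵥ (M *ᵥ c) = (Mᴴ * (H * M)) *ᵥ c := by
    intro c
    rw [Matrix.mulVec_mulVec, Matrix.mul_assoc]
  have hπM : ∀ c, π (M *ᵥ c) = M *ᵥ c := by
    intro c
    rw [hπapply, hMHM, ← hB0eapp, LinearEquiv.symm_apply_apply]
  have hπfix : ∀ v ∈ V1, π v = v := by
    intro v hv
    obtain ⟨c, rfl⟩ := hMrepr v hv
    exact hπM c
  have hsubC1 : ∀ y, (Mᴴ * H) *ᵥ (y - π y) = 0 := by
    intro y
    rw [Matrix.mulVec_sub, hπapply, hMHM, ← hB0eapp, LinearEquiv.apply_symm_apply, sub_self]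
  have hπorth : ∀ y, ∀ v ∈ V1, star v ⬝ᵥ (H *ᵥ (y - π y)) = 0 := by
    intro y v hv
    obtain ⟨c, rfl⟩ := hMrepr v hv
    rw [adj1, Matrix.mulVec_mulVec, hsubC1, dotProduct_zero]
  -- the subspaces
  set C1 : Submodule ℂ (n → ℂ) := LinearMap.ker ((Mᴴ * H).mulVecLin) with hC1
  have hC1mem : ∀ y, y ∈ C1 ↔ (Mᴴ * H) *ᵥ y = 0 := by
    intro y; simp [hC1, LinearMap.mem_ker, Matrix.mulVecLin_apply]
  have hC1orth : ∀ y ∈ C1, ∀ v ∈ V1, star v ⬝ᵥ (H *ᵥ y) = 0 := by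
    intro y hy v hv
    obtain ⟨c, rfl⟩ := hMrepr v hv
    rw [adj1, Matrix.mulVec_mulVec, (hC1mem y).mp hy, dotProduct_zero]
  have hV1C1 : ∀ v, v ∈ V1 → v ∈ C1 → v = 0 := by
    intro v hv hc
    by_contra hne
    have h1 := hV1neg v hv hne
    rw [hC1orth v hc v hv] at h1
    exact lt_irrefl 0 h1
  have hV1C1top : V1 ⊔ C1 = ⊤ := by
    rw [eq_top_iff]
    intro y _
    have hy : y = π y + (y - π y) := by abel
    rw [hy]
    exact Submodule.add_mem_sup (hπmem y) ((hC1mem _).mpr (hsubC1 y))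
  set V2 : Submodule ℂ (n → ℂ) := U ⊓ C1 with hV2
  set V3 : Submodule ℂ (n → ℂ) := W ⊓ C1 with hV3
  have hV2U : V2 ≤ U := inf_le_left
  have hV3W : V3 ≤ W := inf_le_left
  have hUeq : V1 ⊔ V2 = U := by
    have h1 := sup_inf_assoc_of_le C1 (show V1 ≤ U from hV1U)
    rw [hV1C1top, top_inf_eq] at h1
    rw [hV2, inf_comm U C1]
    exact h1.symm
  have hWeq : V1 ⊔ V3 = W := by
    have h1 := sup_inf_assoc_of_le C1 (show V1 ≤ W from hV1W)
    rw [hV1C1top, top_inf_eq] at h1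
    rw [hV3, inf_comm W C1]
    exact h1.symm
  obtain ⟨V4, hV4⟩ := Submodule.exists_isCompl (U ⊔ W)
  have hUWV4bot : ∀ x, x ∈ U ⊔ W → x ∈ V4 → x = 0 := fun x h1 h2 => by
    simpa using hV4.disjoint.le_bot ⟨h1, h2⟩
  have hUV3bot : ∀ x, x ∈ U → x ∈ V3 → x = 0 := by
    intro x hxU hxV3
    exact hV1C1 x ⟨hxU, hxV3.1⟩ hxV3.2
  have hWV2bot : ∀ x, x ∈ W → x ∈ V2 → x = 0 := by
    intro x hxW hxV2
    exact hV1C1 x ⟨hxV2.1, hxW⟩ hxV2.2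
  have hUV3 : U ⊔ V3 = U ⊔ W := by
    apply le_antisymm
    · exact sup_le le_sup_left (le_trans hV3W le_sup_right)
    · refine sup_le le_sup_left ?_
      rw [← hWeq]
      exact sup_le (le_trans hV1U le_sup_left) le_sup_right
  -- complement structure
  have hc4 : IsCompl V4 (U ⊔ W) := hV4.symm
  have hc3 : IsCompl V3 (U ⊔ V4) := by
    constructor
    · rw [disjoint_iff, Submodule.eq_bot_iff]
      rintro x ⟨hx3, hxUV4⟩
      obtain ⟨u, hu, v4, hv4, hxe⟩ := Submodule.mem_sup.mp hxUV4
      have hv40 : v4 = 0 := by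
        apply hUWV4bot v4 _ hv4
        have : v4 = x - u := by rw [← hxe]; abel
        rw [this]
        exact sub_mem (Submodule.mem_sup_right (hV3W hx3)) (Submodule.mem_sup_left hu)
      have hxu : x = u := by rw [← hxe, hv40, add_zero]
      exact hUV3bot x (hxu ▸ hu) hx3
    · rw [codisjoint_iff, eq_top_iff, ← hV4.codisjoint.eq_top]
      apply sup_le
      · rw [← hUV3]
        exact sup_le (le_trans le_sup_left le_sup_right) le_sup_left
      · exact le_trans le_sup_right le_sup_right
  have hc2 : IsCompl V2 (W ⊔ V4) := by
    constructor
    · rw [disjoint_iff, Submodule.eq_bot_iff]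
      rintro x ⟨hx2, hxWV4⟩
      obtain ⟨w, hw, v4, hv4, hxe⟩ := Submodule.mem_sup.mp hxWV4
      have hv40 : v4 = 0 := by
        apply hUWV4bot v4 _ hv4
        have : v4 = x - w := by rw [← hxe]; abel
        rw [this]
        exact sub_mem (Submodule.mem_sup_left (hV2U hx2)) (Submodule.mem_sup_right hw)
      have hxw : x = w := by rw [← hxe, hv40, add_zero]
      exact hWV2bot x (hxw ▸ hw) hx2
    · rw [codisjoint_iff, eq_top_iff, ← hV4.codisjoint.eq_top]
      apply sup_le
      · apply sup_le
        · rw [← hUeq]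
          exact sup_le (le_trans hV1W (le_trans le_sup_left le_sup_right)) le_sup_left
        · exact le_trans le_sup_left le_sup_right
      · exact le_trans le_sup_right le_sup_right
  -- the projections
  set p2 : (n → ℂ) →ₗ[ℂ] (n → ℂ) :=
    V2.subtype ∘ₗ Submodule.projectionOnto V2 (W ⊔ V4) hc2 with hp2def
  set p3 : (n → ℂ) →ₗ[ℂ] (n → ℂ) :=
    V3.subtype ∘ₗ Submodule.projectionOnto V3 (U ⊔ V4) hc3 with hp3def
  set p4 : (n → ℂ) →ₗ[ℂ] (n → ℂ) :=
    V4.subtype ∘ₗ Submodule.projectionOnto V4 (U ⊔ W) hc4 with hp4def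
  have hp2mem : ∀ x, p2 x ∈ V2 := fun x =>
    (Submodule.projectionOnto V2 (W ⊔ V4) hc2 x).2
  have hp3mem : ∀ x, p3 x ∈ V3 := fun x =>
    (Submodule.projectionOnto V3 (U ⊔ V4) hc3 x).2
  have hp4mem : ∀ x, p4 x ∈ V4 := fun x =>
    (Submodule.projectionOnto V4 (U ⊔ W) hc4 x).2
  have hp2id : ∀ v ∈ V2, p2 v = v := by
    intro v hv
    have h := Submodule.linearProjOfIsCompl_apply_left hc2 ⟨v, hv⟩
    calc p2 v = ↑(Submodule.projectionOnto V2 (W ⊔ V4) hc2 ↑(⟨v, hv⟩ : V2)) := rfl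
      _ = v := by rw [h]
  have hp3id : ∀ v ∈ V3, p3 v = v := by
    intro v hv
    have h := Submodule.linearProjOfIsCompl_apply_left hc3 ⟨v, hv⟩
    calc p3 v = ↑(Submodule.projectionOnto V3 (U ⊔ V4) hc3 ↑(⟨v, hv⟩ : V3)) := rfl
      _ = v := by rw [h]
  have hp4id : ∀ v ∈ V4, p4 v = v := by
    intro v hv
    have h := Submodule.linearProjOfIsCompl_apply_left hc4 ⟨v, hv⟩
    calc p4 v = ↑(Submodule.projectionOnto V4 (U ⊔ W) hc4 ↑(⟨v, hv⟩ : V4)) := rfl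
      _ = v := by rw [h]
  have hp2zero : ∀ z ∈ W ⊔ V4, p2 z = 0 := by
    intro z hz
    show (V2.subtype) (Submodule.projectionOnto V2 (W ⊔ V4) hc2 z) = 0
    rw [Submodule.linearProjOfIsCompl_apply_right' hc2 hz, map_zero]
  have hp3zero : ∀ z ∈ U ⊔ V4, p3 z = 0 := by
    intro z hz
    show (V3.subtype) (Submodule.projectionOnto V3 (U ⊔ V4) hc3 z) = 0
    rw [Submodule.linearProjOfIsCompl_apply_right' hc3 hz, map_zero]
  have hp4zero : ∀ z ∈ U ⊔ W, p4 z = 0 := by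
    intro z hz
    show (V4.subtype) (Submodule.projectionOnto V4 (U ⊔ W) hc4 z) = 0
    rw [Submodule.linearProjOfIsCompl_apply_right' hc4 hz, map_zero]
  have hp2W : ∀ z ∈ W, p2 z = 0 := fun z hz => hp2zero z (Submodule.mem_sup_left hz)
  have hp2V4 : ∀ z ∈ V4, p2 z = 0 := fun z hz => hp2zero z (Submodule.mem_sup_right hz)
  have hp2V1 : ∀ z ∈ V1, p2 z = 0 := fun z hz => hp2W z (hV1W hz)
  have hp3U : ∀ z ∈ U, p3 z = 0 := fun z hz => hp3zero z (Submodule.mem_sup_left hz)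
  have hp3V4 : ∀ z ∈ V4, p3 z = 0 := fun z hz => hp3zero z (Submodule.mem_sup_right hz)
  have hp3V1 : ∀ z ∈ V1, p3 z = 0 := fun z hz => hp3U z (hV1U hz)
  have hp4U : ∀ z ∈ U, p4 z = 0 := fun z hz => hp4zero z (Submodule.mem_sup_left hz)
  have hp4W : ∀ z ∈ W, p4 z = 0 := fun z hz => hp4zero z (Submodule.mem_sup_right hz)
  -- remainder lies in V1
  have hrem : ∀ x, x - p2 x - p3 x - p4 x ∈ V1 := by
    intro x
    have hx : x ∈ (U ⊔ W) ⊔ V4 := by rw [hV4.codisjoint.eq_top]; trivial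
    obtain ⟨y, hy, v4, hv4, hxeq⟩ := Submodule.mem_sup.mp hx
    have hy' : y ∈ U ⊔ V3 := by rw [hUV3]; exact hy
    obtain ⟨u, hu, v3, hv3, hyeq⟩ := Submodule.mem_sup.mp hy'
    have hu' : u ∈ V1 ⊔ V2 := by rw [hUeq]; exact hu
    obtain ⟨v1, hv1, v2, hv2, hueq⟩ := Submodule.mem_sup.mp hu'
    have hxval : x = v1 + v2 + v3 + v4 := by rw [← hxeq, ← hyeq, ← hueq]
    have e2 : p2 x = v2 := by
      rw [hxval]
      simp only [map_add]
      rw [hp2V1 v1 hv1, hp2id v2 hv2, hp2W v3 (hV3W hv3), hp2V4 v4 hv4]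
      abel
    have e3 : p3 x = v3 := by
      rw [hxval]
      simp only [map_add]
      rw [hp3V1 v1 hv1, hp3U v2 (hV2U hv2), hp3id v3 hv3, hp3V4 v4 hv4]
      abel
    have e4 : p4 x = v4 := by
      rw [hxval]
      simp only [map_add]
      rw [hp4U v1 (hV1U hv1), hp4U v2 (hV2U hv2), hp4W v3 (hV3W hv3), hp4id v4 hv4]
      abel
    rw [e2, e3, e4, hxval]
    have : v1 + v2 + v3 + v4 - v2 - v3 - v4 = v1 := by abel
    rw [this]
    exact hv1
  -- matrices of the projections
  set Pp : Matrix n n ℂ := LinearMap.toMatrix' π with hPpdef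
  set P2 : Matrix n n ℂ := LinearMap.toMatrix' p2 with hP2def
  set P3 : Matrix n n ℂ := LinearMap.toMatrix' p3 with hP3def
  set P4 : Matrix n n ℂ := LinearMap.toMatrix' p4 with hP4def
  have hPp : ∀ y, Pp *ᵥ y = π y := fun y => mulVec_toMatrix' π y
  have hP2 : ∀ y, P2 *ᵥ y = p2 y := fun y => mulVec_toMatrix' p2 y
  have hP3 : ∀ y, P3 *ᵥ y = p3 y := fun y => mulVec_toMatrix' p3 y
  have hP4 : ∀ y, P4 *ᵥ y = p4 y := fun y => mulVec_toMatrix' p4 y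
  set P1 : Matrix n n ℂ := 1 - P2 - P3 - P4 with hP1def
  have hP1 : ∀ x, P1 *ᵥ x = x - p2 x - p3 x - p4 x := by
    intro x
    rw [hP1def, Matrix.sub_mulVec, Matrix.sub_mulVec, Matrix.sub_mulVec, Matrix.one_mulVec,
      hP2, hP3, hP4]
  have hP1mem : ∀ x, P1 *ᵥ x ∈ V1 := fun x => by rw [hP1]; exact hrem x
  -- the matrices Ht, N, Δ
  set Ht : Matrix n n ℂ := (1 - Pp)ᴴ * (H * (1 - Pp)) with hHtdef
  set N : Matrix n n ℂ :=
    Ppᴴ * (H * Pp) + P2ᴴ * (Ht * P2) + P3ᴴ * (Ht * P3) - P4ᴴ * (1 * P4) with hNdef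
  set Δ : Matrix n n ℂ := N - H with hΔdef
  have hHtapp : ∀ x y, star x ⬝ᵥ (Ht *ᵥ y) = star (x - π x) ⬝ᵥ (H *ᵥ (y - π y)) := by
    intro x y
    rw [hHtdef, quad' H (1 - Pp) (1 - Pp), Matrix.sub_mulVec, Matrix.one_mulVec, hPp,
      Matrix.sub_mulVec, Matrix.one_mulVec, hPp]
  have hN : ∀ x y, star x ⬝ᵥ (N *ᵥ y) =
      star (π x) ⬝ᵥ (H *ᵥ (π y)) + star (p2 x) ⬝ᵥ (Ht *ᵥ (p2 y))
        + star (p3 x) ⬝ᵥ (Ht *ᵥ (p3 y)) - star (p4 x) ⬝ᵥ (p4 y) := by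
    intro x y
    rw [hNdef]
    rw [Matrix.sub_mulVec, Matrix.add_mulVec, Matrix.add_mulVec, dotProduct_sub,
      dotProduct_add, dotProduct_add]
    rw [quad' H Pp Pp, quad' Ht P2 P2, quad' Ht P3 P3, quad' 1 P4 P4]
    rw [Matrix.one_mulVec, hPp, hPp, hP2, hP2, hP3, hP3, hP4, hP4]
  have hHtV1L : ∀ v ∈ V1, ∀ z, star v ⬝ᵥ (Ht *ᵥ z) = 0 := by
    intro v hv z
    rw [hHtapp, hπfix v hv, sub_self, star_zero, zero_dotProduct]
  have hHtV1R : ∀ z, ∀ v ∈ V1, star z ⬝ᵥ (Ht *ᵥ v) = 0 := by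
    intro z v hv
    rw [hHtapp, hπfix v hv, sub_self, Matrix.mulVec_zero, dotProduct_zero]
  have hHsplit : ∀ x y, star x ⬝ᵥ (H *ᵥ y)
      = star (π x) ⬝ᵥ (H *ᵥ (π y)) + star x ⬝ᵥ (Ht *ᵥ y) := by
    intro x y
    rw [hHtapp]
    have hx' : x = π x + (x - π x) := by abel
    have hy' : y = π y + (y - π y) := by abel
    conv_lhs => rw [hx', hy']
    rw [star_add, add_dotProduct, Matrix.mulVec_add, dotProduct_add, dotProduct_add]
    rw [hπorth y (π x) (hπmem x)]
    have hcross : star (x - π x) ⬝ᵥ (H *ᵥ (π y)) = 0 := by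
      rw [herm_symm hH, hπorth x (π y) (hπmem y), star_zero]
    rw [hcross]
    ring
  have hΔform : ∀ x y, star x ⬝ᵥ (Δ *ᵥ y)
      = star x ⬝ᵥ (N *ᵥ y) - star x ⬝ᵥ (H *ᵥ y) := by
    intro x y
    rw [hΔdef, Matrix.sub_mulVec, dotProduct_sub]
  -- hermitian facts
  have hHtherm : Htᴴ = Ht := by
    rw [hHtdef]
    simp only [Matrix.conjTranspose_mul, Matrix.conjTranspose_conjTranspose, hH.eq,
      Matrix.mul_assoc]
  have hNherm : Nᴴ = N := by
    rw [hNdef]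
    simp only [Matrix.conjTranspose_sub, Matrix.conjTranspose_add, Matrix.conjTranspose_mul,
      Matrix.conjTranspose_conjTranspose, Matrix.conjTranspose_one, hH.eq, hHtherm,
      Matrix.mul_assoc, Matrix.one_mul, Matrix.mul_one]
  have hΔherm : Δᴴ = Δ := by
    rw [hΔdef, Matrix.conjTranspose_sub, hNherm, hH.eq]
  -- key vanishing identities
  have keyU : ∀ a ∈ U, ∀ b ∈ U, star a ⬝ᵥ (Δ *ᵥ b) = 0 := by
    intro a ha b hb
    rw [hΔform, hN a b, hHsplit a b]
    rw [hp3U a ha, hp4U a ha]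
    have hsplit2 : star a ⬝ᵥ (Ht *ᵥ b) = star (p2 a) ⬝ᵥ (Ht *ᵥ (p2 b)) := by
      have haV1 : a - p2 a ∈ V1 := by
        have h0 := hrem a
        rwa [hp3U a ha, hp4U a ha, sub_zero, sub_zero] at h0
      have hbV1 : b - p2 b ∈ V1 := by
        have h0 := hrem b
        rwa [hp3U b hb, hp4U b hb, sub_zero, sub_zero] at h0
      have ha' : a = (a - p2 a) + p2 a := by abel
      have hb' : b = (b - p2 b) + p2 b := by abel
      conv_lhs => rw [ha', hb']
      rw [star_add, add_dotProduct, Matrix.mulVec_add, dotProduct_add, dotProduct_add,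
        hHtV1L _ haV1, hHtV1L _ haV1, hHtV1R _ _ hbV1]
      ring
    rw [hsplit2]
    simp only [star_zero, zero_dotProduct]
    ring
  have keyW : ∀ a ∈ W, ∀ b ∈ W, star a ⬝ᵥ (Δ *ᵥ b) = 0 := by
    intro a ha b hb
    rw [hΔform, hN a b, hHsplit a b]
    rw [hp2W a ha, hp4W a ha]
    have hsplit3 : star a ⬝ᵥ (Ht *ᵥ b) = star (p3 a) ⬝ᵥ (Ht *ᵥ (p3 b)) := by
      have haV1 : a - p3 a ∈ V1 := by
        have h0 := hrem a
        rw [hp2W a ha, hp4W a ha, sub_zero] at h0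
        have hre : a - 0 - p3 a = a - p3 a := by abel
        rwa [hre] at h0
      have hbV1 : b - p3 b ∈ V1 := by
        have h0 := hrem b
        rw [hp2W b hb, hp4W b hb, sub_zero] at h0
        have hre : b - 0 - p3 b = b - p3 b := by abel
        rwa [hre] at h0
      have ha' : a = (a - p3 a) + p3 a := by abel
      have hb' : b = (b - p3 b) + p3 b := by abel
      conv_lhs => rw [ha', hb']
      rw [star_add, add_dotProduct, Matrix.mulVec_add, dotProduct_add, dotProduct_add,
        hHtV1L _ haV1, hHtV1L _ haV1, hHtV1R _ _ hbV1]
      ring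
    rw [hsplit3]
    simp only [star_zero, zero_dotProduct]
    ring
  have keyV1 : ∀ a ∈ V1, ∀ b, star a ⬝ᵥ (Δ *ᵥ b) = 0 := by
    intro a ha b
    rw [hΔform, hN a b, hHsplit a b]
    rw [hp2V1 a ha, hp3V1 a ha, hp4U a (hV1U ha), hHtV1L a ha b]
    simp only [star_zero, zero_dotProduct]
    ring
  have keyV1' : ∀ b, ∀ a ∈ V1, star b ⬝ᵥ (Δ *ᵥ a) = 0 := by
    intro b a ha
    rw [herm_symm (hΔherm : Δ.IsHermitian), keyV1 a ha b, star_zero]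
  -- zero blocks
  have Zgen : ∀ (A B : Matrix n n ℂ),
      (∀ x y, star (A *ᵥ x) ⬝ᵥ (Δ *ᵥ (B *ᵥ y)) = 0) → Aᴴ * (Δ * B) = 0 := by
    intro A B h
    apply eq_zero_of_form
    intro x y
    rw [quad']
    exact h x y
  have Z11 : P1ᴴ * (Δ * P1) = 0 := Zgen _ _ fun x y => keyV1 _ (hP1mem x) _
  have Z12 : P1ᴴ * (Δ * P2) = 0 := Zgen _ _ fun x y => keyV1 _ (hP1mem x) _
  have Z13 : P1ᴴ * (Δ * P3) = 0 := Zgen _ _ fun x y => keyV1 _ (hP1mem x) _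
  have Z14 : P1ᴴ * (Δ * P4) = 0 := Zgen _ _ fun x y => keyV1 _ (hP1mem x) _
  have Z21 : P2ᴴ * (Δ * P1) = 0 := Zgen _ _ fun x y => keyV1' _ _ (hP1mem y)
  have Z31 : P3ᴴ * (Δ * P1) = 0 := Zgen _ _ fun x y => keyV1' _ _ (hP1mem y)
  have Z41 : P4ᴴ * (Δ * P1) = 0 := Zgen _ _ fun x y => keyV1' _ _ (hP1mem y)
  have Z22 : P2ᴴ * (Δ * P2) = 0 := Zgen _ _ fun x y => by
    rw [hP2, hP2]
    exact keyU _ (hV2U (hp2mem x)) _ (hV2U (hp2mem y))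
  have Z33 : P3ᴴ * (Δ * P3) = 0 := Zgen _ _ fun x y => by
    rw [hP3, hP3]
    exact keyW _ (hV3W (hp3mem x)) _ (hV3W (hp3mem y))
  -- the matrix K
  set K : Matrix n n ℂ := P2ᴴ * (Δ * P3) + P4ᴴ * (Δ * P3) + P2ᴴ * (Δ * P4)
      + (2⁻¹ : ℂ) • (P4ᴴ * (Δ * P4)) with hKdef
  have hstar2 : star (2⁻¹ : ℂ) = (2⁻¹ : ℂ) := by
    rw [star_inv₀]
    norm_num
  have hKH : Kᴴ = P3ᴴ * (Δ * P2) + P3ᴴ * (Δ * P4) + P4ᴴ * (Δ * P2)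
      + (2⁻¹ : ℂ) • (P4ᴴ * (Δ * P4)) := by
    rw [hKdef]
    simp only [Matrix.conjTranspose_add, Matrix.conjTranspose_smul, Matrix.conjTranspose_mul,
      Matrix.conjTranspose_conjTranspose, hΔherm, hstar2, Matrix.mul_assoc]
  have hPsum : P1 + P2 + P3 + P4 = 1 := by
    rw [hP1def]; abel
  have hKcomb : K + Kᴴ = Δ := by
    have h0 : (P1 + P2 + P3 + P4)ᴴ * (Δ * (P1 + P2 + P3 + P4)) = Δ := by
      rw [hPsum]
      simp
    rw [hKH, hKdef]
    conv_rhs => rw [← h0]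
    simp only [Matrix.conjTranspose_add, Matrix.add_mul, Matrix.mul_add,
      Z11, Z12, Z13, Z14, Z21, Z31, Z41, Z22, Z33, add_zero, zero_add]
    have hhalf : (2⁻¹ : ℂ) • (P4ᴴ * (Δ * P4)) + (2⁻¹ : ℂ) • (P4ᴴ * (Δ * P4))
        = P4ᴴ * (Δ * P4) := by
      rw [← add_smul]
      norm_num
    module
  -- negativity of N
  have nonposU : ∀ a ∈ U, star a ⬝ᵥ (H *ᵥ a) ≤ 0 := by
    intro a ha
    rcases eq_or_ne a 0 with rfl | hne
    · simp
    · exact le_of_lt (hU a ha hne)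
  have hHtUnonpos : ∀ a ∈ U, star a ⬝ᵥ (Ht *ᵥ a) ≤ 0 := by
    intro a ha
    rw [hHtapp]
    exact nonposU _ (sub_mem ha (hV1U (hπmem a)))
  have hHtWnonpos : ∀ a ∈ W, star a ⬝ᵥ (Ht *ᵥ a) ≤ 0 := by
    intro a ha
    rw [hHtapp]
    have : a - π a ∈ W := sub_mem ha (hV1W (hπmem a))
    rcases eq_or_ne (a - π a) 0 with h0 | hne
    · rw [h0]; simp
    · exact le_of_lt (hW _ this hne)
  have combine : ∀ a b c e : ℂ, a ≤ 0 → b ≤ 0 → c ≤ 0 → e ≤ 0 →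
      (a < 0 ∨ b < 0 ∨ c < 0 ∨ e < 0) → a + b + c + e < 0 := by
    intro a b c e ha hb hc he h
    rcases h with h | h | h | h
    · have h1 : a + b < 0 := by simpa using add_lt_add_of_lt_of_le h hb
      have h2 : a + b + c < 0 := by simpa using add_lt_add_of_lt_of_le h1 hc
      simpa using add_lt_add_of_lt_of_le h2 he
    · have h1 : a + b < 0 := by simpa using add_lt_add_of_le_of_lt ha h
      have h2 : a + b + c < 0 := by simpa using add_lt_add_of_lt_of_le h1 hc
      simpa using add_lt_add_of_lt_of_le h2 he
    · have h2 : a + b + c < 0 := by simpa using add_lt_add_of_le_of_lt (add_nonpos ha hb) h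
      simpa using add_lt_add_of_lt_of_le h2 he
    · have h2 : a + b + c ≤ 0 := add_nonpos (add_nonpos ha hb) hc
      simpa using add_lt_add_of_le_of_lt h2 h
  have hNneg : ∀ x, x ≠ 0 → star x ⬝ᵥ (N *ᵥ x) < 0 := by
    intro x hx
    rw [hN x x, sub_eq_add_neg]
    have t1 : star (π x) ⬝ᵥ (H *ᵥ (π x)) ≤ 0 := nonposU _ (hV1U (hπmem x))
    have t2 : star (p2 x) ⬝ᵥ (Ht *ᵥ (p2 x)) ≤ 0 := hHtUnonpos _ (hV2U (hp2mem x))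
    have t3 : star (p3 x) ⬝ᵥ (Ht *ᵥ (p3 x)) ≤ 0 := hHtWnonpos _ (hV3W (hp3mem x))
    have t4 : (0 : ℂ) ≤ star (p4 x) ⬝ᵥ (p4 x) := dotProduct_star_self_nonneg _
    refine combine _ _ _ _ t1 t2 t3 (neg_nonpos.mpr t4) ?_
    rcases eq_or_ne (p2 x) 0 with h2 | h2
    · rcases eq_or_ne (p3 x) 0 with h3 | h3
      · rcases eq_or_ne (p4 x) 0 with h4 | h4
        · -- x ∈ V1, so the first term is strictly negative
          left
          have hxV1 : x ∈ V1 := by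
            have h0 := hrem x
            rwa [h2, h3, h4, sub_zero, sub_zero, sub_zero] at h0
          rw [hπfix x hxV1]
          exact hU x (hV1U hxV1) hx
        · right; right; right
          have t4' : (0 : ℂ) < star (p4 x) ⬝ᵥ (p4 x) :=
            t4.lt_of_ne fun h => h4 (dotProduct_star_self_eq_zero.mp h.symm)
          exact neg_lt_zero.mpr t4'
      · right; right; left
        have hsub : p3 x - π (p3 x) ≠ 0 := by
          intro h0
          have hmem : p3 x ∈ V1 := by
            rw [sub_eq_zero.mp h0]
            exact hπmem _
          exact h3 (hV1C1 _ hmem (hp3mem x).2)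
        rw [hHtapp]
        exact hW _ (sub_mem (hV3W (hp3mem x)) (hV1W (hπmem _))) hsub
    · right; left
      have hsub : p2 x - π (p2 x) ≠ 0 := by
        intro h0
        have hmem : p2 x ∈ V1 := by
          rw [sub_eq_zero.mp h0]
          exact hπmem _
        exact h2 (hV1C1 _ hmem (hp2mem x).2)
      rw [hHtapp]
      exact hU _ (sub_mem (hV2U (hp2mem x)) (hV1U (hπmem _))) hsub
  -- conclude
  refine ⟨K, ?_, ?_, ?_⟩
  · intro u hu
    rw [hKdef]
    simp only [Matrix.add_mulVec, Matrix.smul_mulVec, ← Matrix.mulVec_mulVec,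
      hP3, hP4, hp3U u hu, hp4U u hu, Matrix.mulVec_zero, smul_zero, add_zero]
  · intro w hw
    rw [hKH]
    simp only [Matrix.add_mulVec, Matrix.smul_mulVec, ← Matrix.mulVec_mulVec,
      hP2, hP4, hp2W w hw, hp4W w hw, Matrix.mulVec_zero, smul_zero, add_zero]
  · have hfinal : H + K + Kᴴ = N := by
      rw [add_assoc, hKcomb, hΔdef]
      abel
    rw [hfinal]
    refine Matrix.PosDef.of_dotProduct_mulVec_pos (Matrix.IsHermitian.neg hNherm) ?_
    intro x hx
    rw [Matrix.neg_mulVec, dotProduct_neg]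
    exact neg_pos.mpr (hNneg x hx)


end FinslerII

open FinslerII in
/-- **Finsler's lemma II** (Gahinet–Apkarian). -/
theorem finsler_lemma_II {n p q kR kS : Type*} [Fintype n] [Fintype p] [Fintype q]
    [Fintype kR] [Fintype kS]
    (H : Matrix n n ℂ) (hH : H.IsHermitian)
    (R : Matrix p n ℂ) (S : Matrix q n ℂ)
    (Rp : Matrix n kR ℂ) (Sp : Matrix n kS ℂ)
    (hRinj : Function.Injective Rp.mulVecLin)
    (hRrange : LinearMap.range Rp.mulVecLin = LinearMap.ker R.mulVecLin)
    (hSinj : Function.Injective Sp.mulVecLin)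
    (hSrange : LinearMap.range Sp.mulVecLin = LinearMap.ker S.mulVecLin) :
    (∃ J : Matrix q p ℂ, (-(H + Rᴴ * Jᴴ * S + Sᴴ * J * R)).PosDef) ↔
      ((-(Rpᴴ * H * Rp)).PosDef ∧ (-(Spᴴ * H * Sp)).PosDef) := by
  classical
  constructor
  · rintro ⟨J, hJ⟩
    have hform : ∀ (x : n → ℂ), (R *ᵥ x = 0 ∨ S *ᵥ x = 0) →
        star x ⬝ᵥ ((H + Rᴴ * Jᴴ * S + Sᴴ * J * R) *ᵥ x) = star x ⬝ᵥ (H *ᵥ x) := by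
      intro x hx
      rw [Matrix.add_mulVec, Matrix.add_mulVec, dotProduct_add, dotProduct_add]
      have e1 : star x ⬝ᵥ ((Rᴴ * Jᴴ * S) *ᵥ x) = 0 := by
        rw [show Rᴴ * Jᴴ * S = Rᴴ * (Jᴴ * S) from Matrix.mul_assoc _ _ _,
          ← Matrix.mulVec_mulVec, ← adj1]
        rcases hx with h | h
        · rw [h]; simp
        · rw [← Matrix.mulVec_mulVec, h, Matrix.mulVec_zero, dotProduct_zero]
      have e2 : star x ⬝ᵥ ((Sᴴ * J * R) *ᵥ x) = 0 := by
        rw [show Sᴴ * J * R = Sᴴ * (J * R) from Matrix.mul_assoc _ _ _,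
          ← Matrix.mulVec_mulVec, ← adj1]
        rcases hx with h | h
        · rw [← Matrix.mulVec_mulVec, h, Matrix.mulVec_zero, dotProduct_zero]
        · rw [h]; simp
      rw [e1, e2]
      ring
    have key : ∀ x, (R *ᵥ x = 0 ∨ S *ᵥ x = 0) → x ≠ 0 → star x ⬝ᵥ (H *ᵥ x) < 0 := by
      intro x hx hne
      have h1 := hJ.dotProduct_mulVec_pos hne
      rw [Matrix.neg_mulVec, dotProduct_neg] at h1
      have h2 := neg_pos.mp h1
      rwa [hform x hx] at h2
    refine ⟨(posDef_neg_conj_iff H hH Rp hRinj).mpr ?_, (posDef_neg_conj_iff H hH Sp hSinj).mpr ?_⟩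
    · intro x hxr hne
      refine key x (Or.inl ?_) hne
      rw [hRrange] at hxr
      simpa [Matrix.mulVecLin_apply] using hxr
    · intro x hxs hne
      refine key x (Or.inr ?_) hne
      rw [hSrange] at hxs
      simpa [Matrix.mulVecLin_apply] using hxs
  · rintro ⟨hR', hS'⟩
    have hUneg := (posDef_neg_conj_iff H hH Rp hRinj).mp hR'
    have hWneg := (posDef_neg_conj_iff H hH Sp hSinj).mp hS'
    rw [hRrange] at hUneg
    rw [hSrange] at hWneg
    obtain ⟨K, hKU, hKW, hKpos⟩ :=
      lemA H hH (LinearMap.ker R.mulVecLin) (LinearMap.ker S.mulVecLin) hUneg hWneg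
    obtain ⟨J, hJ⟩ := exists_J R S Sp hSinj hSrange K
      (fun u hu => hKU u (by simpa [LinearMap.mem_ker, Matrix.mulVecLin_apply] using hu))
      (fun w hw => hKW w (by simpa [LinearMap.mem_ker, Matrix.mulVecLin_apply] using hw))
    refine ⟨J, ?_⟩
    have h2 : Rᴴ * Jᴴ * S = Kᴴ := by
      rw [← hJ]
      simp only [Matrix.conjTranspose_mul, Matrix.conjTranspose_conjTranspose, Matrix.mul_assoc]
    have hfin : H + Rᴴ * Jᴴ * S + Sᴴ * J * R = H + K + Kᴴ := by
      rw [hJ, h2]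
      abel
    rw [hfin]
    exact hKpos
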